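/- Let F be a finite family of continuous self-maps on a Hausdorff space X and let Y be a nonempty closed subset with F(X) ⊆ Y ⊆ X. Then F is a topologically contracting system on X if and only if F is a topologically contracting system on Y. -/

import Mathlib

open Set

/-- Composition of a list of self-maps. -/
def Comp {X : Type*} (l : List (X → X)) : X → X := l.foldr (· ∘ ·) id

/-- `F` is a topologically contracting system on `Y ⊆ X`. -/
def TopContracting {X : Type*} [TopologicalSpace X] (F : Set (X → X)) (Y : Set X) : Prop :=
  ∀ 𝒰 : Set (Set X), (∀ U ∈ 𝒰, IsOpen U) → Y ⊆ ⋃₀ 𝒰 →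
    ∃ n : ℕ, ∀ l : List (X → X), l.length = n → (∀ f ∈ l, f ∈ F) →
      ∃ U ∈ 𝒰, Comp l '' Y ⊆ U

lemma Comp_append {X : Type*} (l l' : List (X → X)) :
    Comp (l ++ l') = Comp l ∘ Comp l' := by
  induction l with
  | nil => rfl
  | cons f t ih =>
    show f ∘ Comp (t ++ l') = (f ∘ Comp t) ∘ Comp l'
    rw [ih]; rfl

lemma Comp_mapsY {X : Type*} [TopologicalSpace X] {F : Set (X → X)} {Y : Set X}
    (hFX : ∀ f ∈ F, range f ⊆ Y) (l : List (X → X)) (hl : ∀ f ∈ l, f ∈ F) :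
    Comp l '' Y ⊆ Y := by
  cases l with
  | nil => simp [Comp]
  | cons f t =>
    intro x hx
    obtain ⟨y, _, rfl⟩ := hx
    exact hFX f (hl f (by simp)) ⟨Comp t y, rfl⟩

theorem stmt1 {X : Type*} [TopologicalSpace X] [T2Space X] (F : Set (X → X)) (hF : F.Finite)
    (hcont : ∀ f ∈ F, Continuous f) (Y : Set X) (hYne : Y.Nonempty) (hYcl : IsClosed Y)
    (hFX : ∀ f ∈ F, range f ⊆ Y) :
    TopContracting F Set.univ ↔ TopContracting F Y := by
  constructor
  · intro h 𝒰 hopen hcov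
    obtain ⟨n, hn⟩ := h (insert Yᶜ 𝒰)
      (by rintro U (rfl | hU); exacts [hYcl.isOpen_compl, hopen U hU])
      (by
        intro x _
        by_cases hx : x ∈ Y
        · obtain ⟨U, hU, hxU⟩ := hcov hx
          exact ⟨U, mem_insert_of_mem _ hU, hxU⟩
        · exact ⟨Yᶜ, mem_insert _ _, hx⟩)
    refine ⟨n, fun l hlen hlF => ?_⟩
    obtain ⟨U, hU, hsub⟩ := hn l hlen hlF
    have hYsub : Comp l '' Y ⊆ U := (image_mono (subset_univ Y)).trans hsub
    have hne : (Comp l '' Y).Nonempty := hYne.image _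
    rcases hU with rfl | hU
    · obtain ⟨x, hx⟩ := hne
      exact absurd (Comp_mapsY hFX l hlF hx) (hYsub hx)
    · exact ⟨U, hU, hYsub⟩
  · intro h 𝒰 hopen hcov
    obtain ⟨n, hn⟩ := h 𝒰 hopen ((subset_univ Y).trans hcov)
    refine ⟨n + 1, fun l hlen hlF => ?_⟩
    obtain ⟨l', g, rfl⟩ : ∃ l' g, l = l' ++ [g] := by
      rcases List.eq_nil_or_concat l with rfl | ⟨l', g, rfl⟩
      · simp at hlen
      · exact ⟨l', g, by simp⟩
    have hl' : l'.length = n := by simpa using hlen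
    obtain ⟨U, hU, hsub⟩ := hn l' hl' (fun f hf => hlF f (by simp [hf]))
    refine ⟨U, hU, ?_⟩
    rw [Comp_append]
    rw [image_comp]
    refine (image_mono ?_).trans hsub
    intro x hx
    obtain ⟨y, _, rfl⟩ := hx
    exact hFX g (hlF g (by simp)) ⟨y, rfl⟩
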